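/- Let X be a totally ordered set and X_∞ = X ∪ {∞}. The circle topology on X_∞ is finer than or equal to the one-point compactification topology on X_∞ (where X carries its order topology); moreover they are equal if and only if X is complete (every nonempty subset bounded above has a supremum). -/

import Mathlib

open Set Topology TopologicalSpace

/-- The circle topology on `X ∪ {∞}`: it extends the order topology of `X` and has the sets
`{∞} ∪ (X \ [x₀, x₁])` as a neighbourhood basis at `∞`. -/
def circleTopology (X : Type*) [LinearOrder X] : TopologicalSpace (WithTop X) :=
  TopologicalSpace.generateFrom
    ({ s : Set (WithTop X) | ∃ u : Set X, (Preorder.topology X).IsOpen u ∧ s = (↑) '' u } ∪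
     { s : Set (WithTop X) | ∃ x₀ x₁ : X, s = insert ⊤ ((↑) '' (Set.Icc x₀ x₁)ᶜ) })

/-- The one-point compactification topology on `X ∪ {∞}`, where `X` carries the order topology:
its open sets are the open subsets of `X` together with the sets `{∞} ∪ (X \ K)` for
`K ⊆ X` closed and compact. -/
def onePointCompTopology (X : Type*) [LinearOrder X] : TopologicalSpace (WithTop X) :=
  TopologicalSpace.generateFrom
    ({ s : Set (WithTop X) | ∃ u : Set X, (Preorder.topology X).IsOpen u ∧ s = (↑) '' u } ∪
     { s : Set (WithTop X) | ∃ K : Set X, @IsClosed X (Preorder.topology X) K ∧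
        @IsCompact X (Preorder.topology X) K ∧ s = insert ⊤ ((↑) '' Kᶜ) })

theorem stmt9 {X : Type*} [LinearOrder X] [Nonempty X] :
    (∀ s : Set (WithTop X), (onePointCompTopology X).IsOpen s → (circleTopology X).IsOpen s) ∧
    (circleTopology X = onePointCompTopology X ↔
      ∀ S : Set X, S.Nonempty → BddAbove S → ∃ x : X, IsLUB S x) := by
  classical
  letI : TopologicalSpace X := Preorder.topology X
  haveI : OrderTopology X := ⟨rfl⟩
  -- circle topology is finer
  have hle : circleTopology X ≤ onePointCompTopology X := by
    apply le_generateFrom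
    rintro s (⟨u, hu, rfl⟩ | ⟨K, hKcl, hKcp, rfl⟩)
    · exact .basic _ (Or.inl ⟨u, hu, rfl⟩)
    · rcases K.eq_empty_or_nonempty with rfl | hK
      · have huniv : insert (⊤ : WithTop X) ((↑) '' (∅ : Set X)ᶜ) = univ := by
          ext x
          simp only [mem_insert_iff, mem_univ, iff_true, compl_empty, image_univ, mem_range]
          cases x with
          | top => exact Or.inl rfl
          | coe a => exact Or.inr ⟨a, rfl⟩
        rw [huniv]
        exact TopologicalSpace.GenerateOpen.univ
      · obtain ⟨x₀, hx₀⟩ := hKcp.exists_isLeast hK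
        obtain ⟨x₁, hx₁⟩ := hKcp.exists_isGreatest hK
        have hKI : K ⊆ Icc x₀ x₁ := fun y hy => ⟨hx₀.2 hy, hx₁.2 hy⟩
        have himg : ((↑) : X → WithTop X) '' (Icc x₀ x₁)ᶜ ⊆ (↑) '' Kᶜ :=
          image_mono (compl_subset_compl.2 hKI)
        have heq : insert (⊤ : WithTop X) ((↑) '' Kᶜ)
            = insert ⊤ ((↑) '' (Icc x₀ x₁)ᶜ) ∪ (↑) '' Kᶜ := by
          apply Subset.antisymm
          · exact insert_subset_iff.2 ⟨Or.inl (mem_insert _ _), subset_union_right⟩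
          · exact union_subset (insert_subset_insert himg) (subset_insert _ _)
        rw [heq]
        have o1 : IsOpen[circleTopology X] (insert ⊤ ((↑) '' (Icc x₀ x₁)ᶜ)) :=
          TopologicalSpace.GenerateOpen.basic _ (Or.inr ⟨x₀, x₁, rfl⟩)
        have o2 : IsOpen[circleTopology X] (((↑) : X → WithTop X) '' Kᶜ) :=
          TopologicalSpace.GenerateOpen.basic _ (Or.inl ⟨Kᶜ, hKcl.isOpen_compl, rfl⟩)
        letI : TopologicalSpace (WithTop X) := circleTopology X
        exact o1.union o2
  have h1 : ∀ s : Set (WithTop X),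
      (onePointCompTopology X).IsOpen s → (circleTopology X).IsOpen s := fun s hs => hle s hs
  -- key: neighbourhoods of ⊤ in one-point topology
  have key : ∀ s : Set (WithTop X), (onePointCompTopology X).IsOpen s → ⊤ ∈ s →
      ∃ K : Set X, IsClosed K ∧ IsCompact K ∧ insert ⊤ ((↑) '' Kᶜ) ⊆ s := by
    intro s hs
    replace hs : TopologicalSpace.GenerateOpen
      ({ s : Set (WithTop X) | ∃ u : Set X, (Preorder.topology X).IsOpen u ∧ s = (↑) '' u } ∪
       { s : Set (WithTop X) | ∃ K : Set X, @IsClosed X (Preorder.topology X) K ∧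
          @IsCompact X (Preorder.topology X) K ∧ s = insert ⊤ ((↑) '' Kᶜ) }) s := hs
    induction hs with
    | basic t ht =>
      intro hmem
      rcases ht with ⟨u, hu, rfl⟩ | ⟨K, hc, hk, rfl⟩
      · exact absurd hmem (by simp)
      · exact ⟨K, hc, hk, Subset.rfl⟩
    | univ => exact fun _ => ⟨∅, isClosed_empty, isCompact_empty, subset_univ _⟩
    | inter t₁ t₂ h₁ h₂ ih₁ ih₂ =>
      rintro ⟨hm₁, hm₂⟩
      obtain ⟨K₁, hc₁, hk₁, hs₁⟩ := ih₁ hm₁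
      obtain ⟨K₂, hc₂, hk₂, hs₂⟩ := ih₂ hm₂
      refine ⟨K₁ ∪ K₂, hc₁.union hc₂, hk₁.union hk₂, ?_⟩
      rintro y (rfl | ⟨a, ha, rfl⟩)
      · exact ⟨hs₁ (mem_insert _ _), hs₂ (mem_insert _ _)⟩
      · rw [compl_union] at ha
        exact ⟨hs₁ (Or.inr ⟨a, ha.1, rfl⟩), hs₂ (Or.inr ⟨a, ha.2, rfl⟩)⟩
    | sUnion S hS ih =>
      rintro ⟨t, htS, hts⟩
      obtain ⟨K, hc, hk, hsub⟩ := ih t htS hts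
      exact ⟨K, hc, hk, hsub.trans (subset_sUnion_of_mem htS)⟩
  refine ⟨h1, ?_, ?_⟩
  · -- equality → completeness
    intro heq S hS hbdd
    obtain ⟨s₀, hs₀⟩ := hS
    obtain ⟨b, hb⟩ := hbdd
    have hopen : (onePointCompTopology X).IsOpen (insert ⊤ ((↑) '' (Icc s₀ b)ᶜ)) := by
      rw [← heq]
      exact .basic _ (Or.inr ⟨s₀, b, rfl⟩)
    obtain ⟨K, hKcl, hKcp, hsub⟩ := key _ hopen (mem_insert _ _)
    have hIK : Icc s₀ b ⊆ K := by
      intro y hy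
      by_contra hyK
      have h2 : (y : WithTop X) ∈ insert ⊤ ((↑) '' (Icc s₀ b)ᶜ) :=
        hsub (Or.inr ⟨y, hyK, rfl⟩)
      rcases h2 with h | ⟨z, hz, hzy⟩
      · exact WithTop.coe_ne_top h
      · exact hz (WithTop.coe_injective hzy ▸ hy)
    have hIcc : IsCompact (Icc s₀ b) := hKcp.of_isClosed_subset isClosed_Icc hIK
    have hUcl : IsClosed (upperBounds S) := by
      have : upperBounds S = ⋂ x ∈ S, Ici x := by
        ext y; simp [upperBounds, mem_iInter]
      rw [this]
      exact isClosed_biInter fun i _ => isClosed_Ici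
    have hUK : IsCompact (upperBounds S ∩ Icc s₀ b) :=
      hIcc.of_isClosed_subset (hUcl.inter isClosed_Icc) inter_subset_right
    have hbmem : b ∈ upperBounds S ∩ Icc s₀ b := ⟨hb, ⟨hb hs₀, le_refl b⟩⟩
    obtain ⟨x, hx⟩ := hUK.exists_isLeast ⟨b, hbmem⟩
    refine ⟨x, hx.1.1, fun y hy => ?_⟩
    rcases le_total b y with h | h
    · exact le_trans (hx.2 hbmem) h
    · exact hx.2 ⟨hy, ⟨hy hs₀, h⟩⟩
  · -- completeness → equality
    intro hcomp
    have hglb : ∀ S : Set X, S.Nonempty → BddBelow S → ∃ x : X, IsGLB S x := by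
      intro S hS hbd
      obtain ⟨a, ha⟩ := hS
      obtain ⟨x, hx⟩ := hcomp (lowerBounds S) hbd ⟨a, fun y hy => hy ha⟩
      exact ⟨x, fun c hc => hx.2 fun z hz => hz hc, hx.1⟩
    letI : SupSet X :=
      ⟨fun s => if h : s.Nonempty ∧ BddAbove s then (hcomp s h.1 h.2).choose
        else Classical.arbitrary X⟩
    letI : InfSet X :=
      ⟨fun s => if h : s.Nonempty ∧ BddBelow s then (hglb s h.1 h.2).choose
        else Classical.arbitrary X⟩
    have hlub' : ∀ s : Set X, BddAbove s → s.Nonempty → IsLUB s (sSup s) := by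
      intro s h1' h2'
      show IsLUB s (if h : s.Nonempty ∧ BddAbove s then (hcomp s h.1 h.2).choose
        else Classical.arbitrary X)
      rw [dif_pos ⟨h2', h1'⟩]
      exact (hcomp s h2' h1').choose_spec
    have hglb' : ∀ s : Set X, BddBelow s → s.Nonempty → IsGLB s (sInf s) := by
      intro s h1' h2'
      show IsGLB s (if h : s.Nonempty ∧ BddBelow s then (hglb s h.1 h.2).choose
        else Classical.arbitrary X)
      rw [dif_pos ⟨h2', h1'⟩]
      exact (hglb s h2' h1').choose_spec
    letI ccl : ConditionallyCompleteLattice X :=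
      { conditionallyCompleteLatticeOfLatticeOfsSup X hlub' with
        sInf := fun s => sInf s
        isGLB_csInf := fun s hne hb => hglb' s hb hne }
    letI cclo : ConditionallyCompleteLinearOrder X :=
      { ccl with
        le_total := le_total
        toDecidableLE := inferInstance
        toDecidableEq := inferInstance
        toDecidableLT := inferInstance
        compare := compare
        compare_eq_compareOfLessAndEq := LinearOrder.compare_eq_compareOfLessAndEq
        csSup_of_not_bddAbove := fun s hs => by
          show (if h : s.Nonempty ∧ BddAbove s then (hcomp s h.1 h.2).choose
              else Classical.arbitrary X)
            = (if h : (∅ : Set X).Nonempty ∧ BddAbove (∅ : Set X)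
              then (hcomp ∅ h.1 h.2).choose else Classical.arbitrary X)
          rw [dif_neg (fun h => hs h.2), dif_neg (by simp)]
        csInf_of_not_bddBelow := fun s hs => by
          show (if h : s.Nonempty ∧ BddBelow s then (hglb s h.1 h.2).choose
              else Classical.arbitrary X)
            = (if h : (∅ : Set X).Nonempty ∧ BddBelow (∅ : Set X)
              then (hglb ∅ h.1 h.2).choose else Classical.arbitrary X)
          rw [dif_neg (fun h => hs h.2), dif_neg (by simp)] }
    have hIccCompact : ∀ x₀ x₁ : X, IsCompact (Icc x₀ x₁) := fun x₀ x₁ => isCompact_Icc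
    refine le_antisymm hle (le_generateFrom ?_)
    rintro s (⟨u, hu, rfl⟩ | ⟨x₀, x₁, rfl⟩)
    · exact .basic _ (Or.inl ⟨u, hu, rfl⟩)
    · exact .basic _ (Or.inr ⟨Icc x₀ x₁, isClosed_Icc, hIccCompact x₀ x₁, rfl⟩)
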